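/- arXiv:1005.5048 — 4 statements merged into one kernel-verified Lean document; each statement's English description precedes it below -/
import Mathlib

section
/- Let f, g be real analytic in a neighborhood of 0 ∈ ℝ with g(0) = 0, g'(0) = 1, and x·g(x) > 0 for x ≠ 0 near 0. Define F(x) = ∫₀ˣ f(s) ds, q(x) = ∫₀ˣ e^{F(s)} ds, and p(x, v) = v·e^{F(x)}. If g'(x) + f(x)·g(x) = 1 for all x in a neighborhood of 0, then along any solution (x(t), y(t)) of the Liénard-type system ẋ = y, ẏ = −g(x) − f(x)y² near the origin, the transformed variables Q(t) = q(x(t)), P(t) = p(x(t), y(t)) satisfy the linear system Q̇ = P, Ṗ = −Q. -/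
open Set MeasureTheory intervalIntegral

-- open set of points b such that the whole interval [c,b] is inside U
private lemma lienard_isOpen_D (U : Set ℝ) (hU : IsOpen U) (c : ℝ) :
    IsOpen {b : ℝ | Set.uIcc c b ⊆ U} := by
  rw [Metric.isOpen_iff]
  intro b hb
  obtain ⟨δ, hδpos, hδ⟩ := (isCompact_uIcc (a := c) (b := b)).exists_thickening_subset_open hU hb
  refine ⟨δ, hδpos, fun b' hb' => ?_⟩
  intro m hm
  rcases (uIcc_subset_uIcc_union_uIcc (a := c) (b := b) (c := b')) hm with h | h
  · exact hb h
  · apply hδ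
    apply Metric.ball_subset_thickening (x := b) right_mem_uIcc
    have := abs_sub_left_of_mem_uIcc h
    rw [Metric.mem_ball] at hb' ⊢
    rw [Real.dist_eq] at *
    linarith [abs_sub_comm b' b ▸ hb']

private lemma lienard_ftc (f : ℝ → ℝ) (U : Set ℝ) (hU : IsOpen U)
    (hfU : ContinuousOn f U) (c b : ℝ) (hb : Set.uIcc c b ⊆ U) :
    HasDerivAt (fun b => ∫ u in c..b, f u) (f b) b := by
  have hbU : b ∈ U := hb right_mem_uIcc
  exact integral_hasDerivAt_right ((hfU.mono hb).intervalIntegrable)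
    (hfU.stronglyMeasurableAtFilter hU b hbU)
    (hfU.continuousAt (hU.mem_nhds hbU))

private lemma lienard_core
    (J : Set ℝ) (f g : ℝ → ℝ)
    (hf : ∀ x ∈ J, AnalyticAt ℝ f x) (hg : ∀ x ∈ J, AnalyticAt ℝ g x)
    (hiso : ∀ x ∈ J, deriv g x + f x * g x = 1)
    (x y : ℝ → ℝ)
    (hx : ∀ t : ℝ, HasDerivAt x (y t) t)
    (hy : ∀ t : ℝ, HasDerivAt y (-(g (x t)) - f (x t) * (y t) ^ 2) t)
    (c : ℝ) (hseg : ∀ t : ℝ, Set.uIcc c (x t) ⊆ J) :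
    ∀ t : ℝ,
      HasDerivAt (fun t => ∫ s in c..(x t), Real.exp (∫ u in c..s, f u))
        (y t * Real.exp (∫ u in c..(x t), f u)) t ∧
      HasDerivAt (fun t => y t * Real.exp (∫ u in c..(x t), f u))
        (-(g (x t) * Real.exp (∫ u in c..(x t), f u))) t ∧
      g (x t) * Real.exp (∫ u in c..(x t), f u)
        = g c + ∫ s in c..(x t), Real.exp (∫ u in c..s, f u) := by
  set U : Set ℝ := {b | AnalyticAt ℝ f b} ∩ {b | AnalyticAt ℝ g b} with hUdef
  have hUopen : IsOpen U := (isOpen_analyticAt ℝ f).inter (isOpen_analyticAt ℝ g)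
  have hJU : J ⊆ U := fun b hb => ⟨hf b hb, hg b hb⟩
  have hfU : ContinuousOn f U := fun b hb => hb.1.continuousAt.continuousWithinAt
  set D : Set ℝ := {b | Set.uIcc c b ⊆ U} with hDdef
  have hDopen : IsOpen D := lienard_isOpen_D U hUopen c
  have hDsub : ∀ b ∈ D, Set.uIcc c b ⊆ D := by
    intro b hb m hm
    exact (Set.uIcc_subset_uIcc Set.left_mem_uIcc hm).trans hb
  -- F has derivative f on D
  have hFD : ∀ b ∈ D, HasDerivAt (fun b => ∫ u in c..b, f u) (f b) b := by
    intro b hb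
    exact lienard_ftc f U hUopen hfU c b hb
  -- E is continuous on D
  have hEcont : ContinuousOn (fun s => Real.exp (∫ u in c..s, f u)) D := by
    intro b hb
    exact (Real.continuous_exp.continuousAt.comp (hFD b hb).continuousAt).continuousWithinAt
  -- q has derivative E on D
  have hqD : ∀ b ∈ D, HasDerivAt (fun b => ∫ s in c..b, Real.exp (∫ u in c..s, f u))
      (Real.exp (∫ u in c..b, f u)) b := by
    intro b hb
    exact lienard_ftc _ D hDopen hEcont c b (hDsub b hb)
  intro t
  have hsegU : Set.uIcc c (x t) ⊆ U := (hseg t).trans hJU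
  have hxtD : x t ∈ D := hsegU
  have hsegD : Set.uIcc c (x t) ⊆ D := by
    intro m hm
    exact (Set.uIcc_subset_uIcc Set.left_mem_uIcc hm).trans hsegU
  -- derivative of Q
  have hQ : HasDerivAt (fun t => ∫ s in c..(x t), Real.exp (∫ u in c..s, f u))
      (y t * Real.exp (∫ u in c..(x t), f u)) t := by
    have h := HasDerivAt.comp t (hqD (x t) hxtD) (hx t)
    simpa [Function.comp_def, mul_comm] using h
  -- derivative of F ∘ x
  have hFx : HasDerivAt (fun t => ∫ u in c..(x t), f u) (f (x t) * y t) t := by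
    have h := HasDerivAt.comp t (hFD (x t) hxtD) (hx t)
    simpa [Function.comp_def] using h
  -- derivative of P
  have hP : HasDerivAt (fun t => y t * Real.exp (∫ u in c..(x t), f u))
      (-(g (x t) * Real.exp (∫ u in c..(x t), f u))) t := by
    have h := (hy t).mul hFx.exp
    convert h using 1
    all_goals first | rfl | ring
  -- the identity  g(x t) e^{F(x t)} = g c + Q t
  have hid : g (x t) * Real.exp (∫ u in c..(x t), f u)
      = g c + ∫ s in c..(x t), Real.exp (∫ u in c..s, f u) := by
    have hint : ∫ s in c..(x t), (0:ℝ)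
        = (g (x t) * Real.exp (∫ u in c..(x t), f u)
            - ∫ s in c..(x t), Real.exp (∫ u in c..s, f u))
          - (g c * Real.exp (∫ u in c..c, f u)
            - ∫ s in c..c, Real.exp (∫ u in c..s, f u)) := by
      apply intervalIntegral.integral_eq_sub_of_hasDerivAt
        (f := fun b => g b * Real.exp (∫ u in c..b, f u)
          - ∫ s in c..b, Real.exp (∫ u in c..s, f u))
      · intro b hb
        have hbJ : b ∈ J := hseg t hb
        have hbD : b ∈ D := hsegD hb
        have hgb : HasDerivAt g (deriv g b) b :=
          ((hg b hbJ).differentiableAt).hasDerivAt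
        have h1 := (hgb.mul (hFD b hbD).exp).sub (hqD b hbD)
        convert h1 using 1
        all_goals try rfl
        have h2 := hiso b hbJ
        linear_combination (-(Real.exp (∫ u in c..b, f u))) * h2
      · exact intervalIntegrable_const
    simp only [intervalIntegral.integral_zero, intervalIntegral.integral_same,
      Real.exp_zero, mul_one, sub_zero] at hint
    linarith
  exact ⟨hQ, hP, hid⟩

private lemma lienard_nonzero_absurd
    (J : Set ℝ) (f g : ℝ → ℝ)
    (hf : ∀ x ∈ J, AnalyticAt ℝ f x) (hg : ∀ x ∈ J, AnalyticAt ℝ g x)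
    (hpos : ∀ x ∈ J, x ≠ 0 → x * g x > 0)
    (hiso : ∀ x ∈ J, deriv g x + f x * g x = 1)
    (x y : ℝ → ℝ)
    (hmem : ∀ t : ℝ, x t ∈ J)
    (hx : ∀ t : ℝ, HasDerivAt x (y t) t)
    (hy : ∀ t : ℝ, HasDerivAt y (-(g (x t)) - f (x t) * (y t) ^ 2) t)
    (hne : ∀ t : ℝ, x t ≠ 0) : False := by
  have hxc : Continuous x := continuous_iff_continuousAt.2 fun t => (hx t).continuousAt
  have hord : Set.OrdConnected (Set.range x) := (isPreconnected_range hxc).ordConnected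
  have hrJ : Set.range x ⊆ J := Set.range_subset_iff.2 hmem
  set c : ℝ := x 0 with hcdef
  have hseg : ∀ t : ℝ, Set.uIcc c (x t) ⊆ J := fun t =>
    (hord.uIcc_subset ⟨0, rfl⟩ ⟨t, rfl⟩).trans hrJ
  have core := lienard_core J f g hf hg hiso x y hx hy c hseg
  -- A t = g c + Q t ; B t = P t
  set A : ℝ → ℝ := fun t => g c + ∫ s in c..(x t), Real.exp (∫ u in c..s, f u) with hAdef
  set B : ℝ → ℝ := fun t => y t * Real.exp (∫ u in c..(x t), f u) with hBdef
  have hAeq : ∀ t, A t = g (x t) * Real.exp (∫ u in c..(x t), f u) := fun t => ((core t).2.2).symm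
  have hA : ∀ t, HasDerivAt A (B t) t := by
    intro t
    have h := (hasDerivAt_const t (g c)).add (core t).1
    rw [zero_add] at h
    exact h
  have hB : ∀ t, HasDerivAt B (-(A t)) t := by
    intro t
    have h := (core t).2.1
    rw [(core t).2.2] at h
    exact h
  have hAne : ∀ t, A t ≠ 0 := by
    intro t
    rw [hAeq t]
    have hp := hpos (x t) (hmem t) (hne t)
    have hgne : g (x t) ≠ 0 := by
      intro h0
      rw [h0, mul_zero] at hp
      exact lt_irrefl 0 hp
    exact mul_ne_zero hgne (Real.exp_ne_zero _)
  -- A is an explicit sinusoid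
  set u : ℝ → ℝ := fun t => A t - (A 0 * Real.cos t + B 0 * Real.sin t) with hudef
  set v : ℝ → ℝ := fun t => B t - (-(A 0) * Real.sin t + B 0 * Real.cos t) with hvdef
  have hu : ∀ t, HasDerivAt u (v t) t := by
    intro t
    have h := (hA t).sub (((Real.hasDerivAt_cos t).const_mul (A 0)).add
      ((Real.hasDerivAt_sin t).const_mul (B 0)))
    convert h using 1
    all_goals try rfl
    simp only [hvdef]
    ring
  have hv : ∀ t, HasDerivAt v (-(u t)) t := by
    intro t
    have h := (hB t).sub (((Real.hasDerivAt_sin t).const_mul (-(A 0))).add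
      ((Real.hasDerivAt_cos t).const_mul (B 0)))
    convert h using 1
    all_goals try rfl
    simp only [hudef]
    ring
  set W : ℝ → ℝ := fun t => u t ^ 2 + v t ^ 2 with hWdef
  have hW : ∀ t, HasDerivAt W 0 t := by
    intro t
    have h := ((hu t).pow 2).add ((hv t).pow 2)
    convert h using 1
    all_goals try rfl
    ring
  have hWconst : ∀ t, W t = W 0 :=
    fun t => is_const_of_deriv_eq_zero (fun s => (hW s).differentiableAt)
      (fun s => (hW s).deriv) t 0
  have hW0 : W 0 = 0 := by
    simp [hWdef, hudef, hvdef]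
  have huzero : ∀ t, u t = 0 := by
    intro t
    have h := hWconst t
    rw [hW0] at h
    have h' : u t ^ 2 + v t ^ 2 = 0 := by simpa [hWdef] using h
    nlinarith [sq_nonneg (u t), sq_nonneg (v t)]
  have hApi : A Real.pi = -(A 0) := by
    have h := huzero Real.pi
    simp only [hudef, Real.cos_pi, Real.sin_pi] at h
    linarith
  -- A is continuous and never zero but changes sign: contradiction via IVT
  have hAcont : ContinuousOn A (Set.uIcc 0 Real.pi) :=
    fun s _ => ((hA s).continuousAt).continuousWithinAt
  have h0mem : (0:ℝ) ∈ Set.uIcc (A 0) (A Real.pi) := by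
    rw [hApi, Set.mem_uIcc]
    rcases le_total (A 0) 0 with h | h
    · exact Or.inl ⟨h, by linarith⟩
    · exact Or.inr ⟨by linarith, h⟩
  obtain ⟨s, _, hs⟩ := intermediate_value_uIcc hAcont h0mem
  exact hAne s hs

/-- If `g' + f·g = 1` near 0, then the change of variables
`Q = ∫₀ˣ e^{F}`, `P = y e^{F(x)}` transforms the Liénard-type system
`ẋ = y, ẏ = −g(x) − f(x) y²` into the linear system `Q̇ = P, Ṗ = −Q`. -/
theorem linearization_of_lienard
    (J : Set ℝ) (hJ : J ∈ nhds (0 : ℝ))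
    (f g : ℝ → ℝ)
    (hf : ∀ x ∈ J, AnalyticAt ℝ f x) (hg : ∀ x ∈ J, AnalyticAt ℝ g x)
    (hg0 : g 0 = 0) (hg1 : deriv g 0 = 1)
    (hpos : ∀ x ∈ J, x ≠ 0 → x * g x > 0)
    (hiso : ∀ x ∈ J, deriv g x + f x * g x = 1)
    (x y : ℝ → ℝ)
    (hmem : ∀ t : ℝ, x t ∈ J)
    (hx : ∀ t : ℝ, HasDerivAt x (y t) t)
    (hy : ∀ t : ℝ, HasDerivAt y (-(g (x t)) - f (x t) * (y t) ^ 2) t) :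
    ∀ t : ℝ,
      HasDerivAt (fun t => ∫ s in (0:ℝ)..(x t), Real.exp (∫ u in (0:ℝ)..s, f u))
        (y t * Real.exp (∫ u in (0:ℝ)..(x t), f u)) t ∧
      HasDerivAt (fun t => y t * Real.exp (∫ u in (0:ℝ)..(x t), f u))
        (-(∫ s in (0:ℝ)..(x t), Real.exp (∫ u in (0:ℝ)..s, f u))) t := by
  -- 0 must be a value of x
  have h0 : ∃ t0 : ℝ, x t0 = 0 := by
    by_contra h
    push_neg at h
    exact lienard_nonzero_absurd J f g hf hg hpos hiso x y hmem hx hy h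
  obtain ⟨t0, ht0⟩ := h0
  have hxc : Continuous x := continuous_iff_continuousAt.2 fun t => (hx t).continuousAt
  have hord : Set.OrdConnected (Set.range x) := (isPreconnected_range hxc).ordConnected
  have hrJ : Set.range x ⊆ J := Set.range_subset_iff.2 hmem
  have hseg : ∀ t : ℝ, Set.uIcc 0 (x t) ⊆ J := by
    intro t
    exact (hord.uIcc_subset ⟨t0, ht0⟩ ⟨t, rfl⟩).trans hrJ
  have core := lienard_core J f g hf hg hiso x y hx hy 0 hseg
  intro t
  refine ⟨(core t).1, ?_⟩
  have h2 := (core t).2.1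
  rw [(core t).2.2, hg0, zero_add] at h2
  exact h2
end

section
/- Consider f(x) = −(7 + 10x + 5x²)/(1 + 3x + 3x² + x³) and g(x) = (1/2)(1 + 3x + 3x² + x³)·x·(2 + x), defined for x near 0 (where 1 + x ≠ 0). Then g'(x) + f(x)·g(x) = 1 for all such x. -/
/-- For `f(x) = −(7+10x+5x²)/(1+3x+3x²+x³)` and
`g(x) = (1/2)(1+3x+3x²+x³)·x·(2+x)`, one has `g' + f·g = 1` for `1 + x ≠ 0`. -/
theorem quartic_zero_urabe (x : ℝ) (hx : 1 + x ≠ 0) :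
    deriv (fun x : ℝ => (1 / 2) * (1 + 3 * x + 3 * x ^ 2 + x ^ 3) * x * (2 + x)) x
      + (-(7 + 10 * x + 5 * x ^ 2) / (1 + 3 * x + 3 * x ^ 2 + x ^ 3))
          * ((1 / 2) * (1 + 3 * x + 3 * x ^ 2 + x ^ 3) * x * (2 + x)) = 1 := by
  have hd : HasDerivAt (fun x : ℝ => (1 / 2) * (1 + 3 * x + 3 * x ^ 2 + x ^ 3) * x * (2 + x))
      (((1 / 2) * (3 + 6 * x + 3 * x ^ 2) * x + (1 / 2) * (1 + 3 * x + 3 * x ^ 2 + x ^ 3)) * (2 + x)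
        + (1 / 2) * (1 + 3 * x + 3 * x ^ 2 + x ^ 3) * x) x := by
    have h1 : HasDerivAt (fun x : ℝ => (1 / 2) * (1 + 3 * x + 3 * x ^ 2 + x ^ 3) * x)
        ((1 / 2) * (3 + 6 * x + 3 * x ^ 2) * x + (1 / 2) * (1 + 3 * x + 3 * x ^ 2 + x ^ 3)) x := by
      have := (((hasDerivAt_id x).const_mul (3:ℝ)).const_add 1 |>.add
        ((hasDerivAt_pow 2 x).const_mul 3) |>.add (hasDerivAt_pow 3 x)).const_mul (1/2 : ℝ)
        |>.mul (hasDerivAt_id x)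
      refine this.congr_deriv ?_
      simp only [id_eq, Nat.cast_ofNat, Pi.add_apply]
      ring
    have h2 : HasDerivAt (fun x : ℝ => 2 + x) 1 x := (hasDerivAt_id x).const_add 2
    refine (h1.mul h2).congr_deriv ?_
    ring
  rw [hd.deriv]
  have h3 : (1 + 3 * x + 3 * x ^ 2 + x ^ 3) ≠ 0 := by
    intro h
    apply hx
    have : (1 + x) ^ 3 = 0 := by rw [← h]; ring
    exact pow_eq_zero_iff (n := 3) (by norm_num) |>.mp this
  field_simp
  ring
end

section
/- Let p₀, p₁, q₀, q₁, q₂ be real polynomials with p₀(0) = q₀(0) = 0 and p₁(0) ≠ 0. If the compatibility condition −p₁'(x)p₀(x)/p₁(x) + q₁(x) + p₀'(x) − 2q₂(x)p₀(x)/p₁(x) = 0 holds identically, then the change of variables z = p₀(x) + p₁(x)y transforms solutions of the system ẋ = p₀(x) + p₁(x)y, ẏ = q₀(x) + q₁(x)y + q₂(x)y² into solutions of the Liénard-type system ẋ = z, ż = −g(x) − f(x)z², where f(x) = −(q₂(x)/p₁(x) + p₁'(x)/p₁(x)) and g(x) = −q₂(x)p₀(x)²/p₁(x) + q₁(x)p₀(x)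 − p₁(x)q₀(x). -/
open Polynomial

/-- Choudhury–Guha reduction: under the compatibility condition (RES), the change of
variables `z = p₀(x) + p₁(x) y` transforms solutions of
`ẋ = p₀(x) + p₁(x)y, ẏ = q₀(x) + q₁(x)y + q₂(x)y²` into solutions of the
Liénard-type system `ẋ = z, ż = −g(x) − f(x)z²`. -/
theorem choudhury_guha_reduction
    (p₀ p₁ q₀ q₁ q₂ : Polynomial ℝ)
    (hp₀ : p₀.eval 0 = 0) (hq₀ : q₀.eval 0 = 0) (hp₁ : p₁.eval 0 ≠ 0)
    (hres : ∀ x : ℝ, p₁.eval x ≠ 0 →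
      -((p₁.derivative.eval x) * p₀.eval x) / p₁.eval x + q₁.eval x
        + p₀.derivative.eval x - 2 * q₂.eval x * p₀.eval x / p₁.eval x = 0)
    (x y : ℝ → ℝ)
    (hdom : ∀ t : ℝ, p₁.eval (x t) ≠ 0)
    (hx : ∀ t : ℝ, HasDerivAt x (p₀.eval (x t) + p₁.eval (x t) * y t) t)
    (hy : ∀ t : ℝ, HasDerivAt y
      (q₀.eval (x t) + q₁.eval (x t) * y t + q₂.eval (x t) * (y t) ^ 2) t)
    (z : ℝ → ℝ) (hz : ∀ t : ℝ, z t = p₀.eval (x t) + p₁.eval (x t) * y t) :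
    ∀ t : ℝ,
      HasDerivAt x (z t) t ∧
      HasDerivAt z
        (-(-(q₂.eval (x t)) * (p₀.eval (x t)) ^ 2 / p₁.eval (x t)
            + q₁.eval (x t) * p₀.eval (x t) - p₁.eval (x t) * q₀.eval (x t))
          - (-(q₂.eval (x t) / p₁.eval (x t)
              + p₁.derivative.eval (x t) / p₁.eval (x t))) * (z t) ^ 2) t := by
  intro t
  have hzfun : z = fun t => p₀.eval (x t) + p₁.eval (x t) * y t := funext hz
  have hxz : HasDerivAt x (z t) t := by rw [hz t]; exact hx t
  refine ⟨hxz, ?_⟩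
  -- derivative of z
  have h0 : HasDerivAt (fun t => p₀.eval (x t) + p₁.eval (x t) * y t)
      (p₀.derivative.eval (x t) * z t +
        ((p₁.derivative.eval (x t) * z t) * y t + p₁.eval (x t) *
          (q₀.eval (x t) + q₁.eval (x t) * y t + q₂.eval (x t) * (y t) ^ 2))) t := by
    exact ((p₀.hasDerivAt (x t)).comp t hxz).add
      (((p₁.hasDerivAt (x t)).comp t hxz).mul (hy t))
  rw [hzfun]
  convert h0 using 1
  have h := hres (x t) (hdom t)
  have hz' := hz t
  set P0 := p₀.eval (x t)
  set P1 := p₁.eval (x t)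
  set P0' := p₀.derivative.eval (x t)
  set P1' := p₁.derivative.eval (x t)
  set Q0 := q₀.eval (x t)
  set Q1 := q₁.eval (x t)
  set Q2 := q₂.eval (x t)
  have hP1 : P1 ≠ 0 := hdom t
  field_simp at h ⊢
  rw [hz']
  linear_combination (-(P0 + P1 * y t)) * h
end

section
/- Let g be real analytic on a neighborhood J of 0 with g(x) = x + x²·g̃(x) for a real analytic g̃, and let F be real analytic with F(0) = 0. Define ξ(x) by ξ(x)² = 2∫₀ˣ g(s)e^{2F(s)} ds with x·ξ(x) > 0 for x ≠ 0. Then ξ is well defined and real analytic on a neighborhood of 0, with ξ(0) = 0 and ξ'(0) = 1. -/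
open Filter FormalMultilinearSeries
open scoped ENNReal Topology


private lemma antideriv_analytic {f : ℝ → ℝ} {p : FormalMultilinearSeries ℝ ℝ ℝ} {r : ℝ≥0∞}
    (hp : HasFPowerSeriesOnBall f p 0 r) :
    ∃ H : ℝ → ℝ, ∃ q : FormalMultilinearSeries ℝ ℝ ℝ,
      HasFPowerSeriesOnBall H q 0 r ∧ q.coeff 0 = 0 ∧
      (∀ n, q.coeff (n + 1) = p.coeff n / (n + 1)) ∧
      (∀ x ∈ EMetric.ball (0 : ℝ) r, HasDerivAt H (f x) x) := by
  classical
  set c : ℕ → ℝ := fun n => Nat.rec 0 (fun m _ => p.coeff m / (m + 1)) n with hc_def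
  have hc0 : c 0 = 0 := rfl
  have hcs : ∀ m, c (m + 1) = p.coeff m / (m + 1) := fun m => rfl
  set q := ofScalars ℝ c with hq_def
  have hqapp : ∀ (n : ℕ) (x : ℝ), (q n fun _ => x) = c n * x ^ n := by
    intro n x; rw [hq_def, ofScalars_apply_eq, smul_eq_mul]
  have hqcoeff : ∀ n, q.coeff n = c n := by
    intro n
    show (q n fun _ => (1 : ℝ)) = c n
    rw [hqapp]; ring
  have hnorm : ∀ n, ‖q n‖ = |c n| := by
    intro n
    rw [hq_def, ofScalars_norm]; rfl
  -- radius bound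
  have hrad : r ≤ q.radius := by
    apply ENNReal.le_of_forall_nnreal_lt
    intro t ht
    apply q.le_radius_of_summable_norm
    have hs : Summable fun n => ‖p n‖ * (t : ℝ) ^ n * t :=
      (p.summable_norm_mul_pow (ht.trans_le hp.r_le)).mul_right _
    have h2 : Summable fun n => ‖q (n + 1)‖ * (t : ℝ) ^ (n + 1) := by
      apply Summable.of_nonneg_of_le (fun n => by positivity) _ hs
      intro n
      rw [hnorm, hcs]
      have h1 : |p.coeff n / ((n : ℝ) + 1)| ≤ ‖p n‖ := by
        rw [abs_div, p.norm_apply_eq_norm_coef]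
        have : (1 : ℝ) ≤ |((n : ℝ) + 1)| := by
          rw [abs_of_pos (by positivity)]; exact le_add_of_nonneg_left (by positivity)
        calc |p.coeff n| / |((n : ℝ) + 1)| ≤ |p.coeff n| / 1 := by
              apply div_le_div_of_nonneg_left (abs_nonneg _) one_pos this
          _ = ‖p.coeff n‖ := by simp
      calc |p.coeff n / ((n : ℝ) + 1)| * (t : ℝ) ^ (n + 1)
          ≤ ‖p n‖ * (t : ℝ) ^ (n + 1) := by
            apply mul_le_mul_of_nonneg_right h1 (by positivity)
        _ = ‖p n‖ * (t : ℝ) ^ n * t := by ring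
    have h3 : Summable fun n => ‖q n‖ * (t : ℝ) ^ n := by
      rw [← summable_nat_add_iff 1]; exact h2
    exact h3
  have hq0 : (0 : ℝ≥0∞) < q.radius := lt_of_lt_of_le hp.r_pos hrad
  have hq : HasFPowerSeriesOnBall q.sum q 0 r :=
    (q.hasFPowerSeriesOnBall hq0).mono hp.r_pos hrad
  refine ⟨q.sum, q, hq, (hqcoeff 0).trans hc0, fun n => (hqcoeff (n+1)).trans (hcs n), ?_⟩
  intro x hx
  -- deriv q.sum x = f x
  have hderiv : deriv q.sum x = f x := by
    rcases eq_or_ne x 0 with rfl | hx0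
    · have h1 : deriv q.sum 0 = q 1 fun _ => 1 := hq.hasFPowerSeriesAt.deriv
      have h2 : f 0 = p.coeff 0 := by
        have h := hp.hasFPowerSeriesAt.coeff_zero (fun _ => (0 : ℝ))
        rw [← h]
        exact (congrArg (p 0) (Subsingleton.elim _ _)).symm
      rw [h1, hqapp, h2]
      have h3 := hcs 0
      norm_num at h3 ⊢
      exact h3
    · -- sums
      have hsum1 : HasSum (fun n => x ^ n • p.coeff n * x) (f x * x) := by
        have h := hp.hasSum hx
        simp only [zero_add] at h
        have h' : HasSum (fun n => x ^ n • p.coeff n) (f x) := by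
          convert h using 2 with n
          all_goals first | rfl | rw [p.apply_eq_pow_smul_coeff]
        exact h'.mul_right x
      have hfd := (hq.fderiv).hasSum hx
      simp only [zero_add] at hfd
      have h5 : HasSum (fun n => (q.derivSeries n fun _ => x) x)
          ((fderiv ℝ q.sum x) x) :=
        hfd.map (ContinuousLinearMap.apply ℝ ℝ x) (ContinuousLinearMap.apply ℝ ℝ x).continuous
      have hterm : ∀ n, (q.derivSeries n fun _ => x) x = x ^ n • p.coeff n * x := by
        intro n
        rw [q.derivSeries_apply_diag, hqapp, hcs]
        have hne : ((n : ℝ) + 1) ≠ 0 := by positivity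
        field_simp
        have hne' : (1 + (n : ℝ)) ≠ 0 := by positivity
        linear_combination (p.coeff n * x * x ^ n) * mul_inv_cancel₀ hne'
      rw [funext hterm] at h5
      have hfx : (fderiv ℝ q.sum x) x = f x * x := h5.unique hsum1
      have hdx : (fderiv ℝ q.sum x) x = deriv q.sum x * x := by
        calc (fderiv ℝ q.sum x) x = (fderiv ℝ q.sum x) (x • (1 : ℝ)) := by norm_num
          _ = x • ((fderiv ℝ q.sum x) (1 : ℝ)) := map_smul _ _ _
          _ = deriv q.sum x * x := by rw [fderiv_apply_one_eq_deriv, smul_eq_mul, mul_comm]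
      rw [hdx] at hfx
      exact mul_right_cancel₀ hx0 hfx
  have hH : AnalyticAt ℝ q.sum x := hq.analyticAt_of_mem hx
  have := hH.differentiableAt.hasDerivAt
  rwa [hderiv] at this



private lemma analyticAt_rlog {x : ℝ} (hx : 0 < x) : AnalyticAt ℝ Real.log x := by
  have hc : AnalyticAt ℂ Complex.log (x : ℂ) :=
    analyticAt_clog (Complex.ofReal_mem_slitPlane.2 hx)
  have h2 : AnalyticAt ℝ (fun y : ℝ => Complex.log (y : ℂ)) x :=
    hc.restrictScalars.comp (Complex.ofRealCLM.analyticAt x)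
  have h3 : AnalyticAt ℝ (fun y : ℝ => (Complex.log (y : ℂ)).re) x :=
    (Complex.reCLM.analyticAt _).comp h2
  exact h3.congr (Eventually.of_forall fun y => Complex.log_ofReal_re y)



private lemma factor_sq {H : ℝ → ℝ} {q : FormalMultilinearSeries ℝ ℝ ℝ} {r : ℝ≥0∞}
    (hq : HasFPowerSeriesOnBall H q 0 r) (h0 : q.coeff 0 = 0) (h1 : q.coeff 1 = 0) :
    ∃ u : ℝ → ℝ, (∀ x ∈ EMetric.ball (0 : ℝ) r, AnalyticAt ℝ u x) ∧
      u 0 = q.coeff 2 ∧ ∀ x ∈ EMetric.ball (0 : ℝ) r, x ^ 2 * u x = H x := by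
  classical
  set c2 : ℕ → ℝ := fun n => q.coeff (n + 2) with hc2_def
  set w := ofScalars ℝ c2 with hw_def
  have hwapp : ∀ (n : ℕ) (x : ℝ), (w n fun _ => x) = c2 n * x ^ n := by
    intro n x; rw [hw_def, ofScalars_apply_eq, smul_eq_mul]
  have hnorm : ∀ n, ‖w n‖ = ‖q (n + 2)‖ := by
    intro n
    rw [hw_def, ofScalars_norm, q.norm_apply_eq_norm_coef]
  have hrad : r ≤ w.radius := by
    apply ENNReal.le_of_forall_nnreal_lt
    intro t ht
    rcases eq_or_ne t 0 with rfl | ht0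
    · simp
    have ht0' : (0 : ℝ) < (t : ℝ) := by positivity
    apply w.le_radius_of_summable_norm
    have hs : Summable fun n => ‖q n‖ * (t : ℝ) ^ n :=
      q.summable_norm_mul_pow (ht.trans_le hq.r_le)
    have h2 : Summable fun n => ‖q (n + 2)‖ * (t : ℝ) ^ (n + 2) :=
      (summable_nat_add_iff (f := fun n => ‖q n‖ * (t : ℝ) ^ n) 2).mpr hs
    have h3 := h2.mul_right (((t : ℝ) ^ 2)⁻¹)
    apply h3.congr
    intro n
    rw [hnorm]
    field_simp
    ring
  have hwrad : (0 : ℝ≥0∞) < w.radius := lt_of_lt_of_le hq.r_pos hrad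
  have hw : HasFPowerSeriesOnBall w.sum w 0 r :=
    (w.hasFPowerSeriesOnBall hwrad).mono hq.r_pos hrad
  refine ⟨w.sum, fun x hx => hw.analyticAt_of_mem hx, ?_, ?_⟩
  · have h := hw.coeff_zero (fun _ => (0 : ℝ))
    rw [← h]
    have : (w 0 fun _ => (0 : ℝ)) = (w 0 fun _ => (1 : ℝ)) :=
      congrArg (w 0) (Subsingleton.elim _ _)
    rw [this, hwapp]; norm_num; rfl
  · intro x hx
    have hsH : HasSum (fun n => x ^ n • q.coeff n) (H x) := by
      have h := hq.hasSum hx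
      simp only [zero_add] at h
      convert h using 2 with n
      all_goals first | rfl | rw [q.apply_eq_pow_smul_coeff]
    have hsu : HasSum (fun n => c2 n * x ^ n) (w.sum x) := by
      have h := hw.hasSum hx
      simp only [zero_add] at h
      convert h using 2 with n
      all_goals first | rfl | rw [hwapp]
    have hsu2 := hsu.mul_left (x ^ 2)
    have heq : (fun n => x ^ 2 * (c2 n * x ^ n)) = fun n => x ^ (n + 2) • q.coeff (n + 2) := by
      funext n
      rw [smul_eq_mul, pow_add, hc2_def]
      ring
    rw [heq] at hsu2
    have h4 := (hasSum_nat_add_iff (f := fun n => x ^ n • q.coeff n) 2).mp hsu2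
    have h5 : ∑ i ∈ Finset.range 2, x ^ i • q.coeff i = 0 := by
      rw [Finset.sum_range_succ, Finset.sum_range_one, h0, h1]
      simp
    rw [h5, add_zero] at h4
    exact h4.unique hsH



/-- Construction of the variable `ξ`: if `g(x) = x + x² g̃(x)` with `g̃` analytic and
`F` is analytic with `F(0) = 0`, then there is a real analytic function `ξ` near `0`
with `ξ(0) = 0`, `ξ'(0) = 1`, `ξ(x)² = 2∫₀ˣ g(s)e^{2F(s)} ds` and `x·ξ(x) > 0`
for `x ≠ 0`. -/
theorem xi_well_defined
    (J : Set ℝ) (hJ : J ∈ nhds (0 : ℝ))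
    (g gt F : ℝ → ℝ)
    (hgt : ∀ x ∈ J, AnalyticAt ℝ gt x)
    (hg : ∀ x ∈ J, g x = x + x ^ 2 * gt x)
    (hF : ∀ x ∈ J, AnalyticAt ℝ F x) (hF0 : F 0 = 0) :
    ∃ ε > (0 : ℝ), ∃ ξ : ℝ → ℝ,
      (∀ x : ℝ, |x| < ε → AnalyticAt ℝ ξ x) ∧
      ξ 0 = 0 ∧ deriv ξ 0 = 1 ∧
      (∀ x : ℝ, |x| < ε →
        (ξ x) ^ 2 = 2 * ∫ s in (0:ℝ)..x, g s * Real.exp (2 * F s)) ∧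
      (∀ x : ℝ, |x| < ε → x ≠ 0 → x * ξ x > 0) := by
  have h0J : (0 : ℝ) ∈ J := mem_of_mem_nhds hJ
  obtain ⟨δ, hδ0, hδJ⟩ := Metric.mem_nhds_iff.mp hJ
  set f : ℝ → ℝ := fun s => g s * Real.exp (2 * F s) with hf_def
  have hfan : ∀ x ∈ Metric.ball (0 : ℝ) δ, AnalyticAt ℝ f x := by
    intro x hx
    have hJx : J ∈ 𝓝 x := mem_of_superset (Metric.isOpen_ball.mem_nhds hx) hδJ
    have hgan : AnalyticAt ℝ g x := by
      have h1 : AnalyticAt ℝ (fun y : ℝ => y + y ^ 2 * gt y) x :=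
        analyticAt_id.add ((analyticAt_id.pow 2).mul (hgt x (hδJ hx)))
      exact h1.congr (by filter_upwards [hJx] with y hy using (hg y hy).symm)
    exact hgan.mul ((analyticAt_const.mul (hF x (hδJ hx))).rexp)
  have hg0 : g 0 = 0 := by rw [hg 0 h0J]; ring
  have hf0 : f 0 = 0 := by rw [hf_def]; simp [hg0]
  -- derivative of f at 0 is 1
  have hgt0 := (hgt 0 h0J).differentiableAt
  have hdg : HasDerivAt g 1 0 := by
    have h1 := (hasDerivAt_pow 2 (0 : ℝ)).mul hgt0.hasDerivAt
    have h2 := (hasDerivAt_id (0 : ℝ)).add h1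
    have h3 : HasDerivAt (fun y : ℝ => y + y ^ 2 * gt y) 1 0 := by
      convert h2 using 1
      all_goals first | rfl | norm_num
    exact h3.congr_of_eventuallyEq (by filter_upwards [hJ] with y hy using hg y hy)
  have hde : HasDerivAt (fun y => Real.exp (2 * F y)) (Real.exp (2 * F 0) * (2 * deriv F 0)) 0 :=
    (((hF 0 h0J).differentiableAt.hasDerivAt).const_mul (2 : ℝ)).exp
  have hdf : HasDerivAt f (1 * Real.exp (2 * F 0) + g 0 * (Real.exp (2 * F 0) * (2 * deriv F 0))) 0 :=
    hdg.mul hde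
  have hderivf : deriv f 0 = 1 := by
    rw [hdf.deriv, hF0, hg0]
    norm_num
  -- power series of f at 0
  obtain ⟨pa, hpa⟩ := hfan 0 (Metric.mem_ball_self hδ0)
  obtain ⟨rp, hp⟩ := hpa
  have hrpos : (0 : ℝ≥0∞) < min rp (ENNReal.ofReal δ) :=
    lt_min hp.r_pos (by simpa [ENNReal.ofReal_pos] using hδ0)
  have hp' := hp.mono hrpos (min_le_left _ _)
  set r := min rp (ENNReal.ofReal δ) with hr_def
  have hball : EMetric.ball (0 : ℝ) r ⊆ Metric.ball (0 : ℝ) δ := by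
    intro y hy
    rw [EMetric.ball, EMetric.mem_ball] at hy
    have h1 : edist y 0 < ENNReal.ofReal δ := lt_of_lt_of_le hy (min_le_right _ _)
    rw [edist_dist] at h1
    rw [Metric.mem_ball]
    exact (ENNReal.ofReal_lt_ofReal_iff hδ0).mp h1
  obtain ⟨H, q, hq, hq0, hqsucc, hder⟩ := antideriv_analytic hp'
  have hpc0 : pa.coeff 0 = 0 := by
    have h := hp'.hasFPowerSeriesAt.coeff_zero (fun _ => (0 : ℝ))
    have h2 : pa.coeff 0 = pa 0 (fun _ => (0 : ℝ)) := congrArg (pa 0) (Subsingleton.elim _ _)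
    rw [h2, h, hf0]
  have hq1 : q.coeff 1 = 0 := by rw [hqsucc 0, hpc0]; norm_num
  have hpc1 : pa.coeff 1 = 1 := by
    have h := hp'.hasFPowerSeriesAt.deriv
    rw [hderivf] at h
    have h2 : pa.coeff 1 = pa 1 (fun _ => (1 : ℝ)) := rfl
    rw [h2, ← h]
  have hq2 : q.coeff 2 = 1 / 2 := by
    have h := hqsucc 1
    rw [hpc1] at h
    rw [h]
    norm_num
  obtain ⟨u, huan, hu0, hueq⟩ := factor_sq hq hq0 hq1
  have hu0' : u 0 = 1 / 2 := by rw [hu0, hq2]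
  have hH0 : H 0 = 0 := by
    have h := hq.coeff_zero (fun _ => (0 : ℝ))
    rw [← h, show (q 0 fun _ => (0 : ℝ)) = q.coeff 0 from congrArg (q 0) (Subsingleton.elim _ _),
      hq0]
  have hint : ∀ x ∈ EMetric.ball (0 : ℝ) r, (∫ s in (0 : ℝ)..x, f s) = H x := by
    intro x hx
    have hsub : Set.uIcc 0 x ⊆ EMetric.ball (0 : ℝ) r := by
      intro y hy
      have h1 : |y| ≤ |x| := by
        rcases Set.mem_uIcc.mp hy with ⟨h2, h3⟩ | ⟨h2, h3⟩
        · rw [abs_of_nonneg h2, abs_of_nonneg (h2.trans h3)]; exact h3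
        · rw [abs_of_nonpos h3, abs_of_nonpos (h2.trans h3)]; linarith
      rw [EMetric.ball, EMetric.mem_ball, edist_dist, Real.dist_eq, sub_zero] at hx ⊢
      exact lt_of_le_of_lt (ENNReal.ofReal_le_ofReal h1) hx
    have hcont : ContinuousOn f (Set.uIcc 0 x) :=
      fun y hy => (hfan y (hball (hsub hy))).continuousAt.continuousWithinAt
    have h := intervalIntegral.integral_eq_sub_of_hasDerivAt
      (fun t ht => hder t (hsub ht)) (hcont.intervalIntegrable)
    rw [h, hH0, sub_zero]
  have hball_nhds : EMetric.ball (0 : ℝ) r ∈ 𝓝 (0 : ℝ) := EMetric.ball_mem_nhds _ hrpos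
  have hucont : ContinuousAt u 0 := (huan 0 (EMetric.mem_ball_self hrpos)).continuousAt
  have hupos : ∀ᶠ x in 𝓝 (0 : ℝ), 0 < u x := by
    have h : Set.Ioi (0 : ℝ) ∈ 𝓝 (u 0) := isOpen_Ioi.mem_nhds (by rw [hu0']; norm_num)
    exact hucont h
  have hEv : ∀ᶠ x in 𝓝 (0 : ℝ), (0 < u x ∧ AnalyticAt ℝ u x) ∧
      (x ^ 2 * u x = H x ∧ (∫ s in (0 : ℝ)..x, f s) = H x) := by
    filter_upwards [hupos, hball_nhds] with x h1 h2
    exact ⟨⟨h1, huan x h2⟩, hueq x h2, hint x h2⟩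
  obtain ⟨ε, hε0, hε⟩ := Metric.eventually_nhds_iff.mp hEv
  set v : ℝ → ℝ := fun x => Real.exp (Real.log (2 * u x) / 2) with hv_def
  have key : ∀ x : ℝ, |x| < ε → (0 < u x ∧ AnalyticAt ℝ u x) ∧
      (x ^ 2 * u x = H x ∧ (∫ s in (0 : ℝ)..x, f s) = H x) := by
    intro x hx
    exact hε (by rw [Real.dist_eq, sub_zero]; exact hx)
  have hvan : ∀ x : ℝ, 0 < u x → AnalyticAt ℝ u x → AnalyticAt ℝ v x := by
    intro x hux huax
    have h2u : AnalyticAt ℝ (fun y => 2 * u y) x := analyticAt_const.mul huax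
    have hlog : AnalyticAt ℝ (fun y => Real.log (2 * u y)) x :=
      (analyticAt_rlog (by linarith)).comp h2u
    exact (hlog.div analyticAt_const (by norm_num)).rexp
  refine ⟨ε, hε0, fun x => x * v x, ?_, ?_, ?_, ?_, ?_⟩
  · intro x hx
    obtain ⟨⟨hu1, hu2⟩, -⟩ := key x hx
    exact analyticAt_id.mul (hvan x hu1 hu2)
  · simp
  · obtain ⟨⟨hu1, hu2⟩, -⟩ := key 0 (by simpa using hε0)
    have hv0 : v 0 = 1 := by
      rw [hv_def]
      show Real.exp (Real.log (2 * u 0) / 2) = 1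
      rw [hu0']
      norm_num
    have hd : HasDerivAt (fun x => x * v x) (1 * v 0 + 0 * deriv v 0) 0 :=
      (hasDerivAt_id 0).mul (hvan 0 hu1 hu2).differentiableAt.hasDerivAt
    rw [hd.deriv, hv0]
    ring
  · intro x hx
    obtain ⟨⟨hu1, -⟩, hHx, hIx⟩ := key x hx
    have hv2 : v x ^ 2 = 2 * u x := by
      have h2 : (0 : ℝ) < 2 * u x := by linarith
      rw [hv_def]
      show Real.exp (Real.log (2 * u x) / 2) ^ 2 = 2 * u x
      rw [sq, ← Real.exp_add, add_halves, Real.exp_log h2]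
    calc (x * v x) ^ 2 = x ^ 2 * v x ^ 2 := by ring
      _ = x ^ 2 * (2 * u x) := by rw [hv2]
      _ = 2 * (x ^ 2 * u x) := by ring
      _ = 2 * H x := by rw [hHx]
      _ = 2 * ∫ s in (0 : ℝ)..x, f s := by rw [hIx]
  · intro x hx hx0
    have hv : 0 < v x := Real.exp_pos _
    have hx2 : 0 < x ^ 2 := pow_two_pos_of_ne_zero hx0
    show 0 < x * (x * v x)
    calc (0 : ℝ) < x ^ 2 * v x := mul_pos hx2 hv
      _ = x * (x * v x) := by ring
end
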